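/- arXiv:2406.19689 — 6 statements merged into one kernel-verified Lean document; each statement's English description precedes it below -/
import Mathlib

section
/- For strict preference profiles, if a committee voting rule f satisfies PSC, then the reverse sequential rule f^RS also satisfies PSC: for every profile R, committee size k, integer ℓ ≥ 1, and solid coalition N' supporting a set C' with |N'| > ℓ·n/(k+1), either C' ⊆ f^RS(R,k) or |f^RS(R,k) ∩ C'| ≥ ℓ. -/
open Finset

/-- In the profile restricted to the available candidates `X` (preferences given by rank
functions `rk`, smaller rank = more preferred), `N'` is a solid coalition supporting `C'`:
every voter of `N'` strictly prefers every member of `C'` to every candidate of `X \ C'`. -/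
def SolidIn {V C : Type*} [DecidableEq C] (rk : V → C → ℕ) (X : Finset C)
    (N' : Finset V) (C' : Finset C) : Prop :=
  ∀ i ∈ N', ∀ x ∈ C', ∀ y ∈ X \ C', rk i x < rk i y

/-- The committee `W` satisfies PSC (Droop quota) for the profile restricted to `X`
and committee size `k`. -/
def PSCwrt {V C : Type*} [Fintype V] [DecidableEq C] (rk : V → C → ℕ) (X : Finset C)
    (k : ℕ) (W : Finset C) : Prop :=
  ∀ ℓ : ℕ, 1 ≤ ℓ → ∀ (N' : Finset V) (C' : Finset C), C' ⊆ X →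
    SolidIn rk X N' C' →
    (ℓ : ℚ) * (Fintype.card V : ℚ) / ((k : ℚ) + 1) < (N'.card : ℚ) →
    C' ⊆ W ∨ ℓ ≤ (W ∩ C').card

/-- Auxiliary recursion for the reverse sequential rule: after `j` elimination steps. -/
def RSaux {V C : Type*} [Fintype C] (f : (V → C → ℕ) → Finset C → ℕ → Finset C)
    (rk : V → C → ℕ) : ℕ → Finset C
  | 0 => Finset.univ
  | j + 1 => f rk (RSaux f rk j) (Fintype.card C - (j + 1))

/-- The reverse sequential rule `f^RS`: `f^RS(R, m) = C` and
`f^RS(R, k) = f(R|_{f^RS(R, k+1)}, k)` for `k < m`. -/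
def RS {V C : Type*} [Fintype C] (f : (V → C → ℕ) → Finset C → ℕ → Finset C)
    (rk : V → C → ℕ) (k : ℕ) : Finset C :=
  RSaux f rk (Fintype.card C - k)


/-- If a committee voting rule `f` (for strict preferences) satisfies PSC, then its reverse
sequential rule `f^RS` also satisfies PSC: for every committee size `k`, every `ℓ ≥ 1`, and
every solid coalition `N'` supporting `C'` with `|N'| > ℓ·n/(k+1)`, either `C' ⊆ f^RS(R,k)`
or `|f^RS(R,k) ∩ C'| ≥ ℓ`. -/
theorem revSeq_psc {V C : Type*} [Fintype V] [Fintype C] [DecidableEq C]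
    (f : (V → C → ℕ) → Finset C → ℕ → Finset C)
    (hSub : ∀ (rk : V → C → ℕ) (X : Finset C) (k : ℕ),
      (∀ i, Function.Injective (rk i)) → k ≤ X.card → f rk X k ⊆ X)
    (hCard : ∀ (rk : V → C → ℕ) (X : Finset C) (k : ℕ),
      (∀ i, Function.Injective (rk i)) → k ≤ X.card → (f rk X k).card = k)
    (hPSC : ∀ (rk : V → C → ℕ) (X : Finset C) (k : ℕ),
      (∀ i, Function.Injective (rk i)) → k ≤ X.card → PSCwrt rk X k (f rk X k))
    (rk : V → C → ℕ) (hrk : ∀ i, Function.Injective (rk i)) :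
    ∀ k, 1 ≤ k → k ≤ Fintype.card C → ∀ ℓ : ℕ, 1 ≤ ℓ →
      ∀ (N' : Finset V) (C' : Finset C), SolidIn rk Finset.univ N' C' →
      (ℓ : ℚ) * (Fintype.card V : ℚ) / ((k : ℚ) + 1) < (N'.card : ℚ) →
      C' ⊆ RS f rk k ∨ ℓ ≤ (RS f rk k ∩ C').card := by
  have main : ∀ j, j ≤ Fintype.card C →
      (RSaux f rk j).card = Fintype.card C - j ∧
      ∀ ℓ : ℕ, 1 ≤ ℓ → ∀ (N' : Finset V) (C' : Finset C),
        SolidIn rk Finset.univ N' C' →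
        (ℓ : ℚ) * (Fintype.card V : ℚ) / (((Fintype.card C - j : ℕ) : ℚ) + 1)
          < (N'.card : ℚ) →
        C' ⊆ RSaux f rk j ∨ ℓ ≤ (RSaux f rk j ∩ C').card := by
    intro j
    induction j with
    | zero =>
      intro _
      refine ⟨by simp [RSaux], ?_⟩
      intro ℓ hℓ N' C' _ _
      exact Or.inl (by simp [RSaux])
    | succ j ih =>
      intro hj
      have hj' : j ≤ Fintype.card C := Nat.le_of_succ_le hj
      obtain ⟨hcard, hIH⟩ := ih hj'
      set m := Fintype.card C with hm
      set Wj := RSaux f rk j with hWj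
      have hk : m - (j+1) ≤ Wj.card := by rw [hcard]; omega
      have hsub := hSub rk Wj (m - (j+1)) hrk hk
      have hcard' := hCard rk Wj (m - (j+1)) hrk hk
      refine ⟨hcard', ?_⟩
      intro ℓ hℓ N' C' hsolid hthresh
      have hthresh' : (ℓ : ℚ) * (Fintype.card V : ℚ) / (((m - j : ℕ) : ℚ) + 1)
          < (N'.card : ℚ) := by
        refine lt_of_le_of_lt ?_ hthresh
        have hden : (((m - (j+1) : ℕ) : ℚ) + 1) ≤ (((m - j : ℕ) : ℚ) + 1) := by
          have h : (m - (j+1) : ℕ) ≤ (m - j : ℕ) := by omega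
          exact_mod_cast add_le_add_left (Nat.cast_le.mpr h) 1
        have hpos : (0 : ℚ) < ((m - (j+1) : ℕ) : ℚ) + 1 := by positivity
        gcongr
      have hsolid' : SolidIn rk Wj N' (C' ∩ Wj) := by
        intro i hi x hx y hy
        rw [mem_inter] at hx
        rw [mem_sdiff] at hy
        apply hsolid i hi x hx.1
        rw [mem_sdiff]
        exact ⟨mem_univ y, fun hyC' => hy.2 (mem_inter.mpr ⟨hyC', hy.1⟩)⟩
      have hstep := hPSC rk Wj (m - (j+1)) hrk hk ℓ hℓ N' (C' ∩ Wj)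
        inter_subset_right hsolid' hthresh
      rcases hIH ℓ hℓ N' C' hsolid hthresh' with hC'sub | hℓcard
      · have heq : C' ∩ Wj = C' := inter_eq_left.mpr hC'sub
        rw [heq] at hstep
        exact hstep
      · right
        rcases hstep with hsub2 | hℓ2
        · calc ℓ ≤ (Wj ∩ C').card := hℓcard
            _ ≤ (f rk Wj (m - (j+1)) ∩ C').card := by
                apply card_le_card
                intro x hx
                rw [mem_inter] at hx ⊢
                exact ⟨hsub2 (mem_inter.mpr ⟨hx.2, hx.1⟩), hx.2⟩
        · calc ℓ ≤ (f rk Wj (m - (j+1)) ∩ (C' ∩ Wj)).card := hℓ2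
            _ ≤ (f rk Wj (m - (j+1)) ∩ C').card := by
                apply card_le_card
                exact inter_subset_inter Subset.rfl inter_subset_left
  intro k hk1 hk2 ℓ hℓ N' C' hsolid hthresh
  obtain ⟨_, hmain⟩ := main (Fintype.card C - k) (Nat.sub_le _ _)
  have heq : Fintype.card C - (Fintype.card C - k) = k := by omega
  apply hmain ℓ hℓ N' C' hsolid
  rw [heq]
  exact hthresh
end

section
/- No committee voting rule satisfies both committee monotonicity and Rank-JR when there are n ≥ 4 voters and m ≥ n/q + 1 candidates, for any divisor q of n with n/q ≥ 4. -/
/-- No committee voting rule satisfies both committee monotonicity and Rank-JR when there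
are `n ≥ 4` voters and `m ≥ n/q + 1` candidates, for any divisor `q` of `n` with `n/q ≥ 4`.
A strict profile assigns to each voter a bijective ranking `R i : Fin m ≃ Fin m`, where the
rank of candidate `x` for voter `i` is `(R i x : ℕ) + 1`. -/
theorem no_committee_monotone_rankJR (n q m : ℕ) (hn : 4 ≤ n) (hq : q ∣ n)
    (hl : 4 ≤ n / q) (hm : n / q + 1 ≤ m) :
    ¬ ∃ f : (Fin n → (Fin m ≃ Fin m)) → ℕ → Finset (Fin m),
      -- f is a committee voting rule: it selects committees of the target size
      (∀ R k, 1 ≤ k → k ≤ m → (f R k).card = k) ∧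
      -- committee monotonicity
      (∀ R k, 1 ≤ k → k < m → f R k ⊆ f R (k + 1)) ∧
      -- Rank-JR
      (∀ R k, 1 ≤ k → k ≤ m → ∀ r : ℕ, 1 ≤ r → r ≤ m →
        ∀ N' : Finset (Fin n), (n : ℚ) / (k : ℚ) ≤ (N'.card : ℚ) →
        (∃ x, ∀ i ∈ N', ((R i) x : ℕ) + 1 ≤ r) →
        ∃ x ∈ f R k, ∃ i ∈ N', ((R i) x : ℕ) + 1 ≤ r) := by
  rintro ⟨f, hcard, hmono, hjr⟩
  have hq0 : 0 < q := by
    rcases Nat.eq_zero_or_pos q with h | h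
    · rw [h, Nat.div_zero] at hl; omega
    · exact h
  set L := n / q with hLdef
  have hqL : q * L = n := Nat.mul_div_cancel' hq
  have hLm : L < m := by omega
  have h0m : 0 < m := by omega
  have h1m : 1 < m := by omega
  -- candidates
  set z : Fin m := ⟨0, h0m⟩ with hz
  set o : Fin m := ⟨1, h1m⟩ with ho
  set e : Fin m := ⟨L, hLm⟩ with he
  set cf : Fin L → Fin m := fun j => ⟨j.val, lt_trans j.isLt hLm⟩ with hcf
  have hcf_inj : Function.Injective cf := by
    intro a b h
    have h2 : (cf a).val = (cf b).val := congrArg Fin.val h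
    exact Fin.ext h2
  -- class of each voter
  have hclsL : ∀ i : Fin n, i.val / q < L := by
    intro i
    rw [Nat.div_lt_iff_lt_mul hq0, mul_comm, hqL]
    exact i.isLt
  set cls : Fin n → Fin m := fun i => ⟨i.val / q, lt_trans (hclsL i) hLm⟩ with hcls
  have hcls_lt : ∀ i : Fin n, (cls i).val < L := fun i => hclsL i
  -- the profile
  set R : Fin n → (Fin m ≃ Fin m) :=
    fun i => (Equiv.swap z (cls i)).trans (Equiv.swap o e) with hR
  have hz_ne_o : z ≠ o := by
    intro h; have := congrArg Fin.val h; simp [hz, ho] at this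
  have hz_ne_e : z ≠ e := by
    intro h; have := congrArg Fin.val h; simp [hz, he] at this; omega
  have he_ne_o : e ≠ o := by
    intro h; have := congrArg Fin.val h; simp [ho, he] at this; omega
  have he_ne_cls : ∀ i, e ≠ cls i := by
    intro i h; have := congrArg Fin.val h
    simp [he, hcls] at this
    have := hclsL i; omega
  have hRtop : ∀ i, R i (cls i) = z := by
    intro i
    show (Equiv.swap o e) ((Equiv.swap z (cls i)) (cls i)) = z
    rw [Equiv.swap_apply_right, Equiv.swap_apply_of_ne_of_ne hz_ne_o hz_ne_e]
  have hRe : ∀ i, R i e = o := by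
    intro i
    show (Equiv.swap o e) ((Equiv.swap z (cls i)) e) = o
    rw [Equiv.swap_apply_of_ne_of_ne (Ne.symm hz_ne_e) (he_ne_cls i),
      Equiv.swap_apply_right]
  -- voter blocks
  set Nj : Fin L → Finset (Fin n) := fun j =>
    Finset.univ.map ⟨fun t : Fin q => ⟨q * j.val + t.val, by
      calc q * j.val + t.val < q * j.val + q := by omega
        _ = q * (j.val + 1) := by ring
        _ ≤ q * L := Nat.mul_le_mul_left q j.isLt
        _ = n := hqL⟩, by
      intro a b hab
      have := congrArg Fin.val hab
      simp only at this
      apply Fin.ext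
      omega⟩ with hNj
  have hNjcard : ∀ j, (Nj j).card = q := by
    intro j; simp [hNj]
  have hNjcls : ∀ j, ∀ i ∈ Nj j, cls i = cf j := by
    intro j i hi
    simp only [hNj, Finset.mem_map, Finset.mem_univ, true_and,
      Function.Embedding.coeFn_mk] at hi
    obtain ⟨t, ht⟩ := hi
    apply Fin.ext
    show i.val / q = j.val
    have hv : i.val = q * j.val + t.val := by
      rw [← ht]
      rfl
    rw [hv, Nat.mul_add_div hq0, Nat.div_eq_of_lt t.isLt, add_zero]
  -- casts
  have hq1 : (1 : ℚ) ≤ (q : ℚ) := by exact_mod_cast hq0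
  have hL4 : (4 : ℚ) ≤ (L : ℚ) := by exact_mod_cast hl
  have hnQ : (n : ℚ) = (q : ℚ) * (L : ℚ) := by exact_mod_cast hqL.symm
  -- Step A: each cf j belongs to f R L
  have hA : ∀ j : Fin L, cf j ∈ f R L := by
    intro j
    obtain ⟨x, hx, i, hi, hle⟩ := hjr R L (by omega) (le_of_lt hLm) 1 le_rfl (by omega)
      (Nj j)
      (by
        rw [hNjcard]
        rw [div_le_iff₀ (by exact_mod_cast (by omega : (0:ℕ) < L))]
        rw [hnQ])
      ⟨cf j, by
        intro i hi
        rw [← hNjcls j i hi, hRtop i]⟩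
    have hx0 : R i x = z := by
      apply Fin.ext
      simp only [hz]
      omega
    have hxe : x = cls i := (R i).injective (hx0.trans (hRtop i).symm)
    rw [hxe, hNjcls j i hi] at hx
    exact hx
  -- Step B: f R L is exactly the image of cf
  have hcardL : (f R L).card = L := hcard R L (by omega) (le_of_lt hLm)
  have hFL : f R L = Finset.image cf Finset.univ := by
    symm
    apply Finset.eq_of_subset_of_card_le
    · intro x hx
      simp only [Finset.mem_image, Finset.mem_univ, true_and] at hx
      obtain ⟨j, rfl⟩ := hx
      exact hA j
    · rw [hcardL, Finset.card_image_of_injective _ hcf_inj, Finset.card_univ,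
        Fintype.card_fin]
  -- committee monotonicity chain from 2 to L
  have hchain : ∀ d, 2 + d ≤ L → f R 2 ⊆ f R (2 + d) := by
    intro d
    induction d with
    | zero => intro _; exact subset_rfl
    | succ d ih =>
        intro h
        have h1 := ih (by omega)
        have h2 := hmono R (2 + d) (by omega) (by omega)
        exact h1.trans (by rw [show 2 + (d + 1) = (2 + d) + 1 by omega]; exact h2)
  have hsub : f R 2 ⊆ f R L := by
    have h := hchain (L - 2) (by omega)
    rwa [show 2 + (L - 2) = L by omega] at h
  -- Step C: J = classes not represented in f R 2
  have hF2card : (f R 2).card = 2 := hcard R 2 (by omega) (by omega)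
  set J : Finset (Fin L) := Finset.univ.filter (fun j => cf j ∉ f R 2) with hJdef
  have hJ : L ≤ J.card + 2 := by
    have h1 : (Finset.univ.filter (fun j : Fin L => cf j ∈ f R 2)).card ≤ 2 := by
      calc (Finset.univ.filter (fun j : Fin L => cf j ∈ f R 2)).card
          ≤ (f R 2).card := by
            apply Finset.card_le_card_of_injOn cf
            · intro j hj
              simp only [Finset.mem_coe, Finset.mem_filter, Finset.mem_univ, true_and] at hj
              exact hj
            · exact fun a _ b _ h => hcf_inj h
        _ = 2 := hF2card
    have h2 := Finset.card_filter_add_card_filter_not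
      (s := (Finset.univ : Finset (Fin L))) (p := fun j => cf j ∈ f R 2)
    rw [Finset.card_univ, Fintype.card_fin] at h2
    have h3 : (Finset.univ.filter (fun j : Fin L => ¬ (cf j ∈ f R 2))).card = J.card := rfl
    omega
  set N' : Finset (Fin n) := J.biUnion Nj with hN'def
  have hdisj : ∀ a ∈ J, ∀ b ∈ J, a ≠ b → Disjoint (Nj a) (Nj b) := by
    intro a _ b _ hab
    rw [Finset.disjoint_left]
    intro i hia hib
    apply hab
    apply hcf_inj
    rw [← hNjcls a i hia, ← hNjcls b i hib]
  have hN'card : N'.card = J.card * q := by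
    rw [hN'def, Finset.card_biUnion hdisj]
    simp [hNjcard, Finset.sum_const, mul_comm]
  have hJQ : (L : ℚ) ≤ (J.card : ℚ) + 2 := by exact_mod_cast hJ
  have hdiv2 : (n : ℚ) / 2 ≤ (N'.card : ℚ) := by
    rw [hN'card]
    rw [div_le_iff₀ (by norm_num)]
    push_cast
    nlinarith [mul_le_mul_of_nonneg_left (show (L:ℚ) ≤ 2 * (J.card : ℚ) by linarith)
      (show (0:ℚ) ≤ (q:ℚ) by linarith)]
  obtain ⟨x, hx, i, hi, hle⟩ := hjr R 2 (by omega) (by omega) 2 (by omega) (by omega)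
    N' hdiv2
    ⟨e, by intro i _; rw [hRe i]⟩
  rw [hN'def, Finset.mem_biUnion] at hi
  obtain ⟨j, hjJ, hij⟩ := hi
  have hval : ((R i) x).val ≤ 1 := by omega
  rcases Nat.lt_or_ge ((R i) x).val 1 with hv | hv
  · -- rank value 0 : x is the top candidate of voter i, i.e. cf j, contradicting j ∈ J
    have hx0 : R i x = z := by apply Fin.ext; simp only [hz]; omega
    have hxe : x = cls i := (R i).injective (hx0.trans (hRtop i).symm)
    rw [hxe, hNjcls j i hij] at hx
    rw [hJdef, Finset.mem_filter] at hjJ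
    exact hjJ.2 hx
  · -- rank value 1 : x = e, but e ∉ f R L ⊇ f R 2
    have hx1 : R i x = o := by apply Fin.ext; simp only [ho]; omega
    have hxe : x = e := (R i).injective (hx1.trans (hRe i).symm)
    have : x ∈ f R L := hsub hx
    rw [hFL] at this
    simp only [Finset.mem_image, Finset.mem_univ, true_and] at this
    obtain ⟨j', hj'⟩ := this
    have := congrArg Fin.val hj'
    rw [hxe] at this
    simp only [hcf, he] at this
    have := j'.isLt
    omega
end

section
/- In a profile with ℓ = n/q groups of q voters each, where group j ranks candidate c_j first and candidate d second (ℓ ≥ 4), any committee of size 2 satisfying Rank-JR must contain candidate d. -/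
open Finset

/-- In a profile with `ℓ = n/q` groups of `q` voters each, where group `j` ranks candidate
`c j` first and candidate `d` second (and `ℓ ≥ 4`), any committee of size 2 satisfying
Rank-JR must contain `d`. Voter `i`'s strict ranking is encoded by the rank function
`rk i` (injective, ranks at least 1, smaller = better). -/
theorem rankJR_size_two_contains_d {V C : Type*} [Fintype V] [Fintype C] [DecidableEq V]
    [DecidableEq C]
    (q ℓ : ℕ) (hℓ : 4 ≤ ℓ)
    (group : V → Fin ℓ)
    (hgroup : ∀ j, (Finset.univ.filter (fun i => group i = j)).card = q)
    (hn : Fintype.card V = ℓ * q)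
    (c : Fin ℓ → C) (hc : Function.Injective c) (d : C) (hd : ∀ j, c j ≠ d)
    (rk : V → C → ℕ)
    (hinj : ∀ i, Function.Injective (rk i)) (hpos : ∀ i x, 1 ≤ rk i x)
    (htop : ∀ i, rk i (c (group i)) = 1) (hsecond : ∀ i, rk i d = 2)
    (W : Finset C) (hW : W.card = 2)
    (hJR : ∀ r : ℕ, 1 ≤ r → r ≤ Fintype.card C →
      ∀ N' : Finset V, (Fintype.card V : ℚ) / 2 ≤ (N'.card : ℚ) →
      (∃ x, ∀ i ∈ N', rk i x ≤ r) →
      ∃ x ∈ W, ∃ i ∈ N', rk i x ≤ r) :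
    d ∈ W := by
  by_contra hdW
  -- card C ≥ 4
  have hcardC : 4 ≤ Fintype.card C := by
    calc 4 ≤ ℓ := hℓ
    _ = Fintype.card (Fin ℓ) := by simp
    _ ≤ Fintype.card C := Fintype.card_le_of_injective c hc
  -- groups whose top candidate is in W
  set T : Finset (Fin ℓ) := univ.filter (fun j => c j ∈ W) with hT
  have hTcard : T.card ≤ 2 := by
    have himg : T.image c ⊆ W := by
      intro x hx
      obtain ⟨j, hj, rfl⟩ := Finset.mem_image.mp hx
      exact (Finset.mem_filter.mp hj).2
    have := Finset.card_le_card himg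
    rwa [Finset.card_image_of_injective _ hc, hW] at this
  set S : Finset (Fin ℓ) := univ \ T with hS
  have hScard : ℓ - 2 ≤ S.card := by
    have : S.card = ℓ - T.card := by
      rw [hS, Finset.card_sdiff_of_subset (Finset.subset_univ _)]
      simp
    omega
  set N' : Finset V := univ.filter (fun i => group i ∈ S) with hN'
  have hNcard : N'.card = S.card * q := by
    have heq : N' = S.biUnion (fun j => univ.filter (fun i => group i = j)) := by
      ext i; simp [hN']
    rw [heq, Finset.card_biUnion]
    · simp [hgroup]
    · intro j hj j' hj' hjj'
      simp only [Finset.disjoint_left, Finset.mem_filter]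
      rintro i ⟨-, rfl⟩ ⟨-, h⟩
      exact hjj' h
  have hhalf : (Fintype.card V : ℚ) / 2 ≤ (N'.card : ℚ) := by
    rw [hn, hNcard, div_le_iff₀ (by norm_num : (0:ℚ) < 2)]
    have : ℓ * q ≤ S.card * q * 2 := by
      have : ℓ ≤ S.card * 2 := by omega
      calc ℓ * q ≤ S.card * 2 * q := Nat.mul_le_mul_right q this
      _ = S.card * q * 2 := by ring
    exact_mod_cast this
  obtain ⟨x, hxW, i, hiN, hxr⟩ := hJR 2 (by norm_num) (by omega) N' hhalf ⟨d, fun i _ => (hsecond i).le⟩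
  have hiS : group i ∈ S := (Finset.mem_filter.mp hiN).2
  have hcW : c (group i) ∉ W := by
    have := (Finset.mem_sdiff.mp hiS).2
    simpa [hT] using this
  interval_cases h : rk i x
  · exact absurd (hpos i x) (by omega)
  · exact hcW (hinj i (h.trans (htop i).symm) ▸ hxW)
  · exact hdW (hinj i (h.trans (hsecond i).symm) ▸ hxW)
end

section
/- Let R be a strict ranking profile over m candidates in which at least α·n voters report the ranking ≿ = c_1 ≻ c_2 ≻ … ≻ c_m, and let ▷ be a ranking satisfying Hare-PSC for R. Then the swap distance between ≿ and ▷ is at most (1 − α + (1+α)/m)·m(m−1)/2. -/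
open Finset

/-- `N'` is a solid coalition supporting `C'`: every voter in `N'` strictly prefers every
candidate of `C'` to every candidate outside `C'` (preferences are given by rank functions
`rk`, smaller rank = more preferred). -/
def Solid {V C : Type*} (rk : V → C → ℕ) (N' : Finset V) (C' : Finset C) : Prop :=
  ∀ i ∈ N', ∀ x ∈ C', ∀ y, y ∉ C' → rk i x < rk i y

/-- The top-`k` candidates of the output ranking `pos` (positions are 0-indexed). -/
def topSet {C : Type*} [Fintype C] (pos : C ≃ Fin (Fintype.card C)) (k : ℕ) : Finset C :=
  Finset.univ.filter (fun x => (pos x : ℕ) < k)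

/-- The ranking `pos` satisfies Hare-PSC for the profile `rk`. -/
def HarePSCranking {V C : Type*} [Fintype V] [Fintype C] [DecidableEq C]
    (rk : V → C → ℕ) (pos : C ≃ Fin (Fintype.card C)) : Prop :=
  ∀ k, 1 ≤ k → k ≤ Fintype.card C → ∀ ℓ : ℕ, 1 ≤ ℓ →
    ∀ (N' : Finset V) (C' : Finset C), Solid rk N' C' →
    (ℓ : ℚ) * (Fintype.card V : ℚ) / (k : ℚ) ≤ (N'.card : ℚ) →
    C' ⊆ topSet pos k ∨ ℓ ≤ (topSet pos k ∩ C').card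

/-- The swap distance between the input ranking `e` (where `e j` is the candidate in
position `j`) and the output ranking `pos`: the number of pairs on which they disagree. -/
def swapDist {C : Type*} [Fintype C] (e : Fin (Fintype.card C) ≃ C)
    (pos : C ≃ Fin (Fintype.card C)) : ℕ :=
  (Finset.univ.filter (fun p : Fin (Fintype.card C) × Fin (Fintype.card C) =>
    p.1 < p.2 ∧ pos (e p.2) < pos (e p.1))).card

lemma card_filter_val_lt (M r : ℕ) (h : r ≤ M) :
    ((univ : Finset (Fin M)).filter (fun j : Fin M => (j:ℕ) < r)).card = r := by
  rcases eq_or_lt_of_le h with rfl | h'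
  · have hu : (univ : Finset (Fin r)).filter (fun j : Fin r => (j:ℕ) < r) = univ := by
      apply filter_true_of_mem; intro j _; exact j.isLt
    simp [hu]
  · have hu : (univ : Finset (Fin M)).filter (fun j : Fin M => (j:ℕ) < r) = Iio (⟨r, h'⟩ : Fin M) := by
      ext j; simp [Finset.mem_Iio, Fin.lt_def]
    rw [hu, Fin.card_Iio]

lemma gauss_q (M : ℕ) : ∑ i ∈ range M, (i:ℚ) = M*(M-1)/2 := by
  induction M with
  | zero => simp
  | succ k ih => rw [Finset.sum_range_succ, ih]; push_cast; ring

lemma fract_add_cases (x α : ℚ) (h0 : 0 ≤ α) (h1 : α ≤ 1) :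
    Int.fract (x + α) = Int.fract x + α ∨ Int.fract (x + α) = Int.fract x + α - 1 := by
  have hx0 := Int.fract_nonneg x
  have hx1 := Int.fract_lt_one x
  have key : Int.fract (x + α) = Int.fract (Int.fract x + α) := by
    conv_lhs => rw [← Int.floor_add_fract x]
    rw [add_assoc, Int.fract_intCast_add]
  rcases lt_or_ge (Int.fract x + α) 1 with hc | hc
  · left; rw [key, Int.fract_eq_self.mpr ⟨by linarith, hc⟩]
  · right
    rw [key]
    have h2 : Int.fract (Int.fract x + α) = Int.fract (Int.fract x + α - 1) := by
      rw [show Int.fract x + α - 1 = Int.fract x + α + (-1 : ℤ) by push_cast; ring, Int.fract_add_intCast]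
    rw [h2, Int.fract_eq_self.mpr ⟨by linarith, by linarith⟩]

lemma fract_potential (α : ℚ) (h0 : 0 < α) (h1 : α ≤ 1) (n : ℕ) :
    2 * α * (∑ s ∈ range n, Int.fract (α * ((s:ℚ)+1)))
      + Int.fract (α*n) * (1 - Int.fract (α*n)) ≤ α * n * (1+α) := by
  induction n with
  | zero => simp
  | succ n ih =>
    have hr0 : (0:ℚ) ≤ Int.fract (α*(n:ℚ)) := Int.fract_nonneg _
    have hr1 : Int.fract (α*(n:ℚ)) < 1 := Int.fract_lt_one _
    have hstep : Int.fract (α*((n:ℚ)+1)) = Int.fract (α*(n:ℚ)) + α ∨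
        Int.fract (α*((n:ℚ)+1)) = Int.fract (α*(n:ℚ)) + α - 1 := by
      rw [show α*((n:ℚ)+1) = α*(n:ℚ) + α by ring]
      exact fract_add_cases _ _ h0.le h1
    rw [Finset.sum_range_succ]
    push_cast
    rcases hstep with h | h
    · rw [h]; nlinarith [ih]
    · have hf0 : (0:ℚ) ≤ Int.fract (α*(n:ℚ)) + α - 1 := by rw [← h]; exact Int.fract_nonneg _
      rw [h]; nlinarith [ih]

lemma floor_sum_lb (α : ℚ) (h0 : 0 ≤ α) (h1 : α ≤ 1) (n : ℕ) :
    (n:ℚ) * (α*n - 1) ≤ 2 * ∑ s ∈ range n, (⌊α*((s:ℚ)+1)⌋₊ : ℚ) := by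
  have hgauss : (∑ s ∈ range n, ((s:ℚ)+1)) = n*(n+1)/2 := by
    induction n with
    | zero => simp
    | succ k ih => rw [Finset.sum_range_succ, ih]; push_cast; ring
  rcases eq_or_lt_of_le h0 with rfl | hpos
  · have : (0:ℚ) ≤ 2 * ∑ s ∈ range n, (⌊(0:ℚ)*((s:ℚ)+1)⌋₊ : ℚ) := by positivity
    nlinarith [this]
  · have key := fract_potential α hpos h1 n
    have hterm : ∀ s ∈ range n, (⌊α*((s:ℚ)+1)⌋₊ : ℚ) = α*((s:ℚ)+1) - Int.fract (α*((s:ℚ)+1)) := by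
      intro s _
      have hx : (0:ℚ) ≤ α*((s:ℚ)+1) := by positivity
      rw [natCast_floor_eq_intCast_floor hx, Int.self_sub_fract]
    rw [Finset.sum_congr rfl hterm, Finset.sum_sub_distrib, ← Finset.mul_sum, hgauss]
    have hfr0 : (0:ℚ) ≤ Int.fract (α*(n:ℚ)) := Int.fract_nonneg _
    have hfr1 : Int.fract (α*(n:ℚ)) < 1 := Int.fract_lt_one _
    nlinarith [key]

lemma count_bound (M : ℕ) (hM : 1 ≤ M) (α : ℚ) (hα0 : 0 ≤ α) (hα1 : α ≤ 1)
    (q : Fin M ≃ Fin M)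
    (floorsum : ((M:ℚ)-1) * (α*((M:ℚ)-1) - 1) ≤ 2 * ∑ s ∈ range (M-1), (⌊α*((s:ℚ)+1)⌋₊ : ℚ))
    (hstep : ∀ (i : Fin M) (t : ℕ), t + 1 ≤ M → ((i:ℕ):ℚ) + 1 ≤ α * ((t:ℚ)+1) → ((q i : ℕ) ≤ t)) :
    ((univ.filter (fun p : Fin M × Fin M => p.1 < p.2 ∧ q p.2 < q p.1)).card : ℚ) ≤
      (1 - α + (1 + α) / (M:ℚ)) * ((M:ℚ) * ((M:ℚ) - 1) / 2) := by
  classical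
  set S := univ.filter (fun p : Fin M × Fin M => p.1 < p.2 ∧ q p.2 < q p.1) with hS
  set A : Fin M → Finset ℕ := fun i => (range (M-1)).filter (fun t => ((q i):ℕ) ≤ t) with hA
  set B : Fin M → Finset ℕ := fun i =>
    (range (M-1)).filter (fun t => ((i:ℕ):ℚ)+1 ≤ α*((t:ℚ)+1)) with hB
  have hBA : ∀ i, B i ⊆ A i := by
    intro i t htm
    simp only [hB, hA, mem_filter, mem_range] at htm ⊢
    exact ⟨htm.1, hstep i t (by omega) htm.2⟩
  have hfib : S.card = ∑ i : Fin M, (S.filter (fun p => p.2 = i)).card :=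
    Finset.card_eq_sum_card_fiberwise (fun p _ => mem_univ p.2)
  have hfiber : ∀ i : Fin M, (S.filter (fun p => p.2 = i)).card ≤ (A i \ B i).card := by
    intro i
    apply Finset.card_le_card_of_injOn (fun p => ((q p.1):ℕ) - 1)
    · intro p hp
      simp only [Finset.mem_coe, hS, mem_filter, mem_univ, true_and] at hp
      obtain ⟨⟨hp1, hp2⟩, hp3⟩ := hp
      subst hp3
      have hba : (q p.2 : ℕ) < (q p.1 : ℕ) := hp2
      have ha1 : 1 ≤ (q p.1 : ℕ) := by omega
      have haM : (q p.1 : ℕ) < M := (q p.1).isLt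
      have hcast : (((q p.1 : ℕ) - 1 : ℕ) : ℚ) + 1 = ((q p.1 : ℕ) : ℚ) := by
        have : ((q p.1 : ℕ) - 1) + 1 = (q p.1 : ℕ) := by omega
        exact_mod_cast congrArg (Nat.cast (R := ℚ)) this
      have hnotle : ¬ (((p.1:ℕ):ℚ) + 1 ≤ α * ((((q p.1 : ℕ) - 1 : ℕ):ℚ)+1)) := by
        intro hcon
        have := hstep p.1 ((q p.1 : ℕ) - 1) (by omega) hcon
        omega
      push_neg at hnotle
      simp only [Finset.mem_coe, mem_sdiff, hA, hB, mem_filter, mem_range]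
      refine ⟨⟨by omega, by omega⟩, ?_⟩
      intro hcon
      obtain ⟨-, hcon2⟩ := hcon
      have hlt : ((p.1:ℕ):ℚ) + 1 ≤ ((p.2:ℕ):ℚ) := by
        have : (p.1:ℕ) + 1 ≤ (p.2:ℕ) := hp1
        exact_mod_cast this
      rw [hcast] at hnotle
      have hchain2 : α * (((q p.1 : ℕ) - 1 : ℕ):ℚ) + α < ((p.2:ℕ):ℚ) + 1 := by
        calc α * (((q p.1 : ℕ) - 1 : ℕ):ℚ) + α = α * ((((q p.1 : ℕ) - 1 : ℕ):ℚ) + 1) := by ring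
        _ = α * ((q p.1 : ℕ) : ℚ) := by rw [hcast]
        _ < ((p.1:ℕ):ℚ) + 1 := hnotle
        _ ≤ ((p.2:ℕ):ℚ) + 1 := by linarith [hlt]
      linarith [hcon2]
    · intro p hp p' hp' heq
      simp only [Finset.coe_filter, Set.mem_setOf_eq, hS, mem_filter, mem_univ, true_and] at hp hp'
      have heqn : (q p.1 : ℕ) - 1 = (q p'.1 : ℕ) - 1 := heq
      have h1 : 1 ≤ (q p.1 : ℕ) := by
        have : (q p.2 : ℕ) < (q p.1 : ℕ) := hp.1.2
        omega
      have h1' : 1 ≤ (q p'.1 : ℕ) := by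
        have : (q p'.2 : ℕ) < (q p'.1 : ℕ) := hp'.1.2
        omega
      have hv : (q p.1 : ℕ) = (q p'.1 : ℕ) := by omega
      have hqq : q p.1 = q p'.1 := Fin.ext hv
      have hfst : p.1 = p'.1 := q.injective hqq
      have hsnd : p.2 = p'.2 := by rw [hp.2, hp'.2]
      exact Prod.ext hfst hsnd
  have hAcard : ∀ i : Fin M, (A i).card = (M-1) - (q i : ℕ) := by
    intro i
    have : A i = Ico ((q i):ℕ) (M-1) := by
      ext t; simp only [hA, mem_filter, mem_range, mem_Ico]; tauto
    rw [this, Nat.card_Ico]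
  have hsd : ∀ i : Fin M, (A i \ B i).card = (A i).card - (B i).card := fun i =>
    Finset.card_sdiff_of_subset (hBA i)
  have hchain : (S.card : ℚ) ≤ ∑ i : Fin M, (((A i).card : ℚ) - ((B i).card : ℚ)) := by
    rw [hfib]
    push_cast
    apply Finset.sum_le_sum
    intro i _
    have h1 : ((S.filter (fun p => p.2 = i)).card : ℚ) ≤ ((A i \ B i).card : ℚ) := by
      exact_mod_cast hfiber i
    rw [hsd i] at h1
    rwa [Nat.cast_sub (Finset.card_le_card (hBA i))] at h1
  have hqsum : ∑ i : Fin M, ((q i : ℕ) : ℚ) = (M:ℚ)*((M:ℚ)-1)/2 := by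
    rw [Equiv.sum_comp q (fun j : Fin M => ((j:ℕ):ℚ))]
    rw [Fin.sum_univ_eq_sum_range (fun j => ((j:ℕ):ℚ)) M]
    exact gauss_q M
  have hAsum : ∑ i : Fin M, (((A i).card : ℚ)) = (M:ℚ)*((M:ℚ)-1)/2 := by
    have hterm : ∀ i : Fin M, ((A i).card : ℚ) = ((M:ℚ)-1) - ((q i : ℕ):ℚ) := by
      intro i
      rw [hAcard i, Nat.cast_sub (by have := (q i).isLt; omega)]
      congr 1
      rw [Nat.cast_sub hM]; push_cast; ring
    rw [Finset.sum_congr rfl (fun i _ => hterm i), Finset.sum_sub_distrib, hqsum]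
    simp [Finset.card_univ]
    ring
  have hBsum : ∑ i : Fin M, (((B i).card : ℚ)) = ∑ t ∈ range (M-1), ((⌊α*((t:ℚ)+1)⌋₊ : ℕ) : ℚ) := by
    have h1 : ∀ i : Fin M, (B i).card = ∑ t ∈ range (M-1),
        (if ((i:ℕ):ℚ)+1 ≤ α*((t:ℚ)+1) then 1 else 0) := by
      intro i; rw [hB]; exact Finset.card_filter _ _
    have h2 : ∑ i : Fin M, ((B i).card) = ∑ t ∈ range (M-1),
        ∑ i : Fin M, (if ((i:ℕ):ℚ)+1 ≤ α*((t:ℚ)+1) then 1 else 0) := by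
      rw [Finset.sum_congr rfl (fun i _ => h1 i)]
      exact Finset.sum_comm
    have h3 : ∀ t ∈ range (M-1), (∑ i : Fin M,
        (if ((i:ℕ):ℚ)+1 ≤ α*((t:ℚ)+1) then 1 else 0)) = ⌊α*((t:ℚ)+1)⌋₊ := by
      intro t htm
      rw [← Finset.card_filter]
      have hcond : ∀ i : Fin M, (((i:ℕ):ℚ)+1 ≤ α*((t:ℚ)+1)) ↔ ((i:ℕ) < ⌊α*((t:ℚ)+1)⌋₊) := by
        intro i
        rw [← Nat.add_one_le_iff, Nat.le_floor_iff (by positivity)]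
        push_cast
        tauto
      rw [Finset.filter_congr (fun i _ => by rw [hcond i])]
      apply card_filter_val_lt
      calc ⌊α*((t:ℚ)+1)⌋₊ ≤ ⌊((t:ℚ)+1)⌋₊ := Nat.floor_le_floor (by nlinarith [Nat.cast_nonneg (α := ℚ) t])
        _ ≤ M := by
          rw [show ((t:ℚ)+1) = ((t+1 : ℕ):ℚ) by push_cast; ring, Nat.floor_natCast]
          simp only [mem_range] at htm; omega
    rw [← Nat.cast_sum, h2, Nat.cast_sum]
    exact Finset.sum_congr rfl (fun t ht => by rw [h3 t ht])
  have hfinal : (S.card : ℚ) ≤ (M:ℚ)*((M:ℚ)-1)/2 - ∑ t ∈ range (M-1), ((⌊α*((t:ℚ)+1)⌋₊ : ℕ) : ℚ) := by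
    rw [Finset.sum_sub_distrib, hAsum, hBsum] at hchain
    exact hchain
  have heq : (M:ℚ)*((M:ℚ)-1)/2 - (((M:ℚ)-1) * (α*((M:ℚ)-1) - 1))/2 =
      (1 - α + (1 + α) / (M:ℚ)) * ((M:ℚ) * ((M:ℚ) - 1) / 2) := by
    have hM0 : (M:ℚ) ≠ 0 := by positivity
    field_simp
    ring
  calc (S.card : ℚ) ≤ (M:ℚ)*((M:ℚ)-1)/2 - ∑ t ∈ range (M-1), ((⌊α*((t:ℚ)+1)⌋₊ : ℕ) : ℚ) := hfinal
    _ ≤ (M:ℚ)*((M:ℚ)-1)/2 - (((M:ℚ)-1) * (α*((M:ℚ)-1) - 1))/2 := by linarith [floorsum]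
    _ = _ := heq

/-- If at least `α·n` voters report the ranking `e = c_1 ≻ … ≻ c_m` and `pos` satisfies
Hare-PSC, then the swap distance between them is at most `(1 − α + (1+α)/m)·m(m−1)/2`. -/
theorem swap_bound_hare {V C : Type*} [Fintype V] [Fintype C] [DecidableEq C]
    (hm : 1 ≤ Fintype.card C)
    (rk : V → C → ℕ)
    (hinj : ∀ i, Function.Injective (rk i)) (hpos1 : ∀ i x, 1 ≤ rk i x)
    (e : Fin (Fintype.card C) ≃ C)
    (α : ℚ) (hα0 : 0 ≤ α) (hα1 : α ≤ 1)
    (N0 : Finset V) (hN0 : α * (Fintype.card V : ℚ) ≤ (N0.card : ℚ))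
    (hrep : ∀ i ∈ N0, ∀ j, rk i (e j) = (j : ℕ) + 1)
    (pos : C ≃ Fin (Fintype.card C)) (hH : HarePSCranking rk pos) :
    (swapDist e pos : ℚ) ≤
      (1 - α + (1 + α) / (Fintype.card C : ℚ)) *
        ((Fintype.card C : ℚ) * ((Fintype.card C : ℚ) - 1) / 2) := by
  classical
  -- Step 1: PSC forces prefix containment
  have step1 : ∀ (i : Fin (Fintype.card C)) (t : ℕ), t + 1 ≤ Fintype.card C →
      ((i:ℕ):ℚ) + 1 ≤ α * ((t:ℚ)+1) → (((e.trans pos) i : ℕ) ≤ t) := by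
    intro i t ht hle
    set r : ℕ := (i:ℕ) + 1 with hr
    set C' : Finset C := univ.filter (fun x => ((e.symm x : Fin (Fintype.card C)):ℕ) < r) with hC'
    have hrm : r ≤ Fintype.card C := i.isLt
    have hcard2 : C'.card = ((univ : Finset (Fin (Fintype.card C))).filter
        (fun j : Fin (Fintype.card C) => (j:ℕ) < r)).card := by
      apply Finset.card_bij (fun x _ => e.symm x)
      · intro x hx; simp only [hC', mem_filter, mem_univ, true_and] at hx ⊢; exact hx
      · intro x _ y _ hxy; exact e.symm.injective hxy
      · intro j hj
        simp only [mem_filter, mem_univ, true_and] at hj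
        exact ⟨e j, by simp only [hC', mem_filter, mem_univ, true_and,
          Equiv.symm_apply_apply]; exact hj, by simp⟩
    have hcard : C'.card = r := hcard2.trans (card_filter_val_lt _ r hrm)
    have hsolid : Solid rk N0 C' := by
      intro v hv x hx y hy
      have hx' : ((e.symm x : Fin (Fintype.card C)):ℕ) < r := by simpa [hC'] using hx
      have hy' : ¬ ((e.symm y : Fin (Fintype.card C)):ℕ) < r := by simpa [hC'] using hy
      have hrx : rk v x = ((e.symm x : Fin (Fintype.card C)):ℕ) + 1 := by
        have h0 := hrep v hv (e.symm x); rwa [Equiv.apply_symm_apply] at h0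
      have hry : rk v y = ((e.symm y : Fin (Fintype.card C)):ℕ) + 1 := by
        have h0 := hrep v hv (e.symm y); rwa [Equiv.apply_symm_apply] at h0
      omega
    have hcond : ((r:ℕ):ℚ) * (Fintype.card V : ℚ) / (((t:ℕ):ℚ)+1) ≤ (N0.card : ℚ) := by
      rw [div_le_iff₀ (by positivity)]
      push_cast
      nlinarith [Nat.cast_nonneg (α := ℚ) (Fintype.card V), hN0, hα0, (by simp [hr] : ((r:ℕ):ℚ) = ((i:ℕ):ℚ)+1), mul_le_mul_of_nonneg_right hle (Nat.cast_nonneg (α := ℚ) (Fintype.card V)), mul_le_mul_of_nonneg_right hN0 (by positivity : (0:ℚ) ≤ (t:ℚ)+1)]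
    have hdisj := hH (t+1) (by omega) ht r (by omega) N0 C' hsolid
      (by push_cast; push_cast at hcond; exact hcond)
    have hsub : C' ⊆ topSet pos (t+1) := by
      rcases hdisj with h | h
      · exact h
      · have hsub2 : topSet pos (t+1) ∩ C' ⊆ C' := inter_subset_right
        have heq := Finset.eq_of_subset_of_card_le hsub2 (by rw [hcard]; exact h)
        intro x hx
        have hmem : x ∈ topSet pos (t+1) ∩ C' := by rw [heq]; exact hx
        exact (Finset.mem_inter.mp hmem).1
    have hei : e i ∈ C' := by
      simp only [hC', mem_filter, mem_univ, true_and, Equiv.symm_apply_apply, hr]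
      omega
    have hfin := hsub hei
    simp only [topSet, mem_filter, mem_univ, true_and] at hfin
    have : ((e.trans pos) i : ℕ) = (pos (e i) : ℕ) := rfl
    omega
  -- floor-sum lower bound
  have hcastm1 : ((Fintype.card C - 1 : ℕ):ℚ) = (Fintype.card C:ℚ) - 1 := by
    rw [Nat.cast_sub hm]; push_cast; ring
  have hfs : ((Fintype.card C:ℚ)-1) * (α*((Fintype.card C:ℚ)-1) - 1) ≤
      2 * ∑ s ∈ range (Fintype.card C - 1), (⌊α*((s:ℚ)+1)⌋₊ : ℚ) := by
    have := floor_sum_lb α hα0 hα1 (Fintype.card C - 1)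
    rwa [hcastm1] at this
  have hmain := count_bound (Fintype.card C) hm α hα0 hα1 (e.trans pos) hfs step1
  exact hmain
end

section
/- In any profile of weak orders, for every committee W and every set D of candidates with |D \ W| > 1 such that D is supported by some generalized solid coalition, there exists a pair (N'', D') with D' ⊊ D, D' not contained in W, and N'' a nonempty generalized solid coalition supporting D'. In particular, taking any voter i supporting D, a least-preferred element d* of D \ W for voter i, and D' = {c ∈ D \ {d*} : c ≿_i d*}, the singleton {i} is a generalized solid coalition supporting D' with D' ⊊ D and D' ⊄ W. -/
open Finset

/-- `N'` is a generalized solid coalition supporting `C'`: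
every voter in `N'` weakly prefers every candidate in `C'` to every candidate outside `C'`. -/
def GSC {V C : Type*} (pref : V → C → C → Prop) (N' : Finset V) (C' : Finset C) : Prop :=
  ∀ i ∈ N', ∀ c' ∈ C', ∀ c, c ∉ C' → pref i c' c

lemma exists_least {C : Type*} [DecidableEq C] (r : C → C → Prop)
    (htot : ∀ x y, r x y ∨ r y x) (htr : Transitive r)
    (S : Finset C) (hS : S.Nonempty) : ∃ d ∈ S, ∀ c ∈ S, r c d := by
  classical
  induction S using Finset.induction_on with
  | empty => exact absurd hS (by simp)
  | @insert a S ha ih =>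
    rcases S.eq_empty_or_nonempty with rfl | hSne
    · exact ⟨a, by simp, by simpa using (htot a a).elim id id⟩
    · obtain ⟨d, hdS, hdmin⟩ := ih hSne
      rcases htot a d with h | h
      · exact ⟨d, Finset.mem_insert_of_mem hdS, fun c hc => by
          rcases Finset.mem_insert.mp hc with rfl | hc
          · exact h
          · exact hdmin c hc⟩
      · refine ⟨a, Finset.mem_insert_self a S, fun c hc => ?_⟩
        rcases Finset.mem_insert.mp hc with rfl | hc
        · exact (htot c c).elim id id
        · exact htr (hdmin c hc) h

/-- For every committee `W` and every candidate set `D` with `|D \ W| > 1` that is supported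
by some (nonempty) generalized solid coalition, there is a pair `(N'', D')` with `D' ⊊ D`,
`D'` not contained in `W`, and `N''` a nonempty generalized solid coalition supporting `D'`. -/
theorem refinement_exists {V C : Type*} [Fintype C] [DecidableEq C] [DecidableEq V]
    (pref : V → C → C → Prop)
    (hTotal : ∀ i x y, pref i x y ∨ pref i y x)
    (hTrans : ∀ i, Transitive (pref i))
    (W D : Finset C) (hD : 1 < (D \ W).card)
    (hsupp : ∃ i : V, ∀ d ∈ D, ∀ c, c ∉ D → pref i d c) :
    ∃ (N'' : Finset V) (D' : Finset C),
      N''.Nonempty ∧ GSC pref N'' D' ∧ D' ⊂ D ∧ ¬ D' ⊆ W := by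
  classical
  obtain ⟨i, hi⟩ := hsupp
  have hne : (D \ W).Nonempty := Finset.card_pos.mp (by omega)
  obtain ⟨d, hd, hdmin⟩ := exists_least (pref i) (hTotal i) (hTrans i) (D \ W) hne
  obtain ⟨hdD, hdW⟩ := Finset.mem_sdiff.mp hd
  -- find another element of D \ W
  obtain ⟨c0, hc0, hc0d⟩ := Finset.exists_mem_ne hD d
  set D' : Finset C := (D.erase d).filter (fun c => pref i c d) with hD'
  refine ⟨{i}, D', ⟨i, Finset.mem_singleton_self i⟩, ?_, ?_, ?_⟩
  · intro j hj c' hc' c hc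
    have hj' : j = i := Finset.mem_singleton.mp hj
    rw [hj']
    have hc'D : c' ∈ D := Finset.mem_of_mem_erase (Finset.mem_filter.mp hc').1
    have hc'd : pref i c' d := (Finset.mem_filter.mp hc').2
    by_cases hcD : c ∈ D
    · by_cases hcd : c = d
      · subst hcd; exact hc'd
      · have hnc : ¬ pref i c d := fun h => hc (Finset.mem_filter.mpr ⟨Finset.mem_erase.mpr ⟨hcd, hcD⟩, h⟩)
        have hdc : pref i d c := (hTotal i c d).resolve_left hnc
        exact hTrans i hc'd hdc
    · exact hi c' hc'D c hcD
  · refine Finset.ssubset_iff_of_subset ?_ |>.mpr ⟨d, hdD, ?_⟩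
    · intro c hc
      exact Finset.mem_of_mem_erase (Finset.mem_filter.mp hc).1
    · intro hcontra
      exact (Finset.mem_erase.mp (Finset.mem_filter.mp hcontra).1).1 rfl
  · intro hsub
    obtain ⟨hc0D, hc0W⟩ := Finset.mem_sdiff.mp hc0
    have : c0 ∈ D' := Finset.mem_filter.mpr
      ⟨Finset.mem_erase.mpr ⟨hc0d, hc0D⟩, hdmin c0 hc0⟩
    exact hc0W (hsub this)
end

section
/- In the 3-voter profile where voter 1 ranks a ≻ d ≻ b ≻ c, voter 2 ranks b ≻ d ≻ c ≻ a, and voter 3 ranks c ≻ d ≻ a ≻ b, the unique committee of size 3 satisfying Droop-PSC is {a,b,c}; consequently any committee monotone rule satisfying Droop-PSC cannot select {d} for k = 1 on this profile. -/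
open Finset

/-- The profile of Figure 5: candidates `a, b, c, d` are `0, 1, 2, 3 : Fin 4`;
voter 0 ranks `a ≻ d ≻ b ≻ c`, voter 1 ranks `b ≻ d ≻ c ≻ a`, voter 2 ranks
`c ≻ d ≻ a ≻ b`. `exampleRk i x` is the rank of candidate `x` for voter `i`. -/
def exampleRk : Fin 3 → Fin 4 → ℕ := ![![1, 3, 4, 2], ![4, 1, 3, 2], ![3, 4, 1, 2]]

/-- `N'` is a solid coalition supporting `C'` in this profile. -/
def SolidEx (N' : Finset (Fin 3)) (C' : Finset (Fin 4)) : Prop :=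
  ∀ i ∈ N', ∀ x ∈ C', ∀ y, y ∉ C' → exampleRk i x < exampleRk i y

/-- The committee `W` satisfies Droop-PSC for committee size `k` in this profile
(there are `n = 3` voters). -/
def DroopEx (W : Finset (Fin 4)) (k : ℕ) : Prop :=
  ∀ ℓ : ℕ, 1 ≤ ℓ → ∀ (N' : Finset (Fin 3)) (C' : Finset (Fin 4)), SolidEx N' C' →
    (ℓ : ℚ) * 3 / ((k : ℚ) + 1) < (N'.card : ℚ) →
    C' ⊆ W ∨ ℓ ≤ (W ∩ C').card

lemma solid_single (i : Fin 3) : SolidEx {i} {i.castSucc} := by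
  unfold SolidEx
  fin_cases i <;> decide

lemma mem_of_droop3 (W : Finset (Fin 4)) (h : DroopEx W 3) (i : Fin 3) :
    i.castSucc ∈ W := by
  rcases h 1 le_rfl {i} {i.castSucc} (solid_single i) (by norm_num) with h' | h'
  · exact h' (mem_singleton_self _)
  · have : W ∩ {i.castSucc} ≠ ∅ := by
      intro he; rw [he] at h'; simp at h'
    rcases nonempty_of_ne_empty this with ⟨x, hx⟩
    rw [mem_inter, mem_singleton] at hx
    exact hx.2 ▸ hx.1

/-- In this profile, the unique size-3 committee satisfying Droop-PSC is `{a, b, c}`;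
consequently, any committee monotone rule satisfying Droop-PSC cannot select `{d}`
for `k = 1`. -/
theorem example_unique_droop_committee :
    (∀ W : Finset (Fin 4), W.card = 3 → DroopEx W 3 → W = {0, 1, 2}) ∧
    (∀ W₁ W₃ : Finset (Fin 4), W₁.card = 1 → W₃.card = 3 →
      DroopEx W₁ 1 → DroopEx W₃ 3 → W₁ ⊆ W₃ → W₁ ≠ {3}) := by
  have key : ∀ W : Finset (Fin 4), W.card = 3 → DroopEx W 3 → W = {0, 1, 2} := by
    intro W hcard hD
    have h0 := mem_of_droop3 W hD 0
    have h1 := mem_of_droop3 W hD 1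
    have h2 := mem_of_droop3 W hD 2
    have hsub : ({0, 1, 2} : Finset (Fin 4)) ⊆ W := by
      intro x hx; fin_cases hx <;> assumption
    exact (eq_of_subset_of_card_le hsub (by rw [hcard]; decide)).symm
  refine ⟨key, fun W₁ W₃ hc1 hc3 hD1 hD3 hsub hne => ?_⟩
  subst hne
  have := key W₃ hc3 hD3
  subst this
  have : (3 : Fin 4) ∈ ({0, 1, 2} : Finset (Fin 4)) := hsub (mem_singleton_self _)
  simp at this
end
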